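/- Let Q(ξ) = ξ₁₁² + ξ₂₂² + ξ₃₃² − 2ξ₁₁ξ₂₂ − 2ξ₂₂ξ₃₃ − 2ξ₃₃ξ₁₁ + ξ₁₂² + ξ₂₃² + ξ₃₁². For every pair of nonzero vectors a, b ∈ ℝ³ and every t > 0, the quadratic form ξ ↦ Q(ξ) − t (aᵀ ξ b)² is not quasiconvex: there exist x, y ∈ ℝ³ with Q(x ⊗ y) − t ((a·x)(b·y))² < 0. That is, Q is extremal in the sense that one cannot subtract a positive multiple of a rank-one quadratic form from Q while preserving quasiconvexity. -/

import Mathlib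

/-- The tensor (outer) product of two vectors in ℝ³, as a 3×3 matrix. -/
def outer (x y : Fin 3 → ℝ) : Matrix (Fin 3) (Fin 3) ℝ :=
  fun i j => x i * y j

/-- The quadratic form
`Q(ξ) = ξ₁₁² + ξ₂₂² + ξ₃₃² − 2ξ₁₁ξ₂₂ − 2ξ₂₂ξ₃₃ − 2ξ₃₃ξ₁₁ + ξ₁₂² + ξ₂₃² + ξ₃₁²`. -/
def Q (ξ : Matrix (Fin 3) (Fin 3) ℝ) : ℝ :=
  ξ 0 0 ^ 2 + ξ 1 1 ^ 2 + ξ 2 2 ^ 2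
    - 2 * ξ 0 0 * ξ 1 1 - 2 * ξ 1 1 * ξ 2 2 - 2 * ξ 2 2 * ξ 0 0
    + ξ 0 1 ^ 2 + ξ 1 2 ^ 2 + ξ 2 0 ^ 2

set_option maxHeartbeats 1000000 in
theorem my_aux (a0 a1 a2 b0 b1 b2 : ℝ)
    (e1 : a0 = 0 ∨ b2 = 0) (e2 : a1 = 0 ∨ b0 = 0) (e3 : a2 = 0 ∨ b1 = 0)
    (e4 : a0 + a1 + a2 = 0 ∨ b0 + b1 + b2 = 0)
    (e5 : a0 + a1 + -a2 = 0 ∨ b0 + b1 + -b2 = 0)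
    (e6 : a0 + -a1 + a2 = 0 ∨ b0 + -b1 + b2 = 0)
    (e7 : a0 + -a1 + -a2 = 0 ∨ b0 + -b1 + -b2 = 0) :
    (a0 = 0 ∧ a1 = 0 ∧ a2 = 0) ∨ (b0 = 0 ∧ b1 = 0 ∧ b2 = 0) := by
  rcases e1 with h1 | h1 <;>
  rcases e2 with h2 | h2 <;>
  rcases e3 with h3 | h3 <;>
  rcases e4 with h4 | h4 <;>
  rcases e5 with h5 | h5 <;>
  rcases e6 with h6 | h6 <;>
  rcases e7 with h7 | h7 <;>
  first
    | (left; refine ⟨by linarith, by linarith, by linarith⟩)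
    | (right; refine ⟨by linarith, by linarith, by linarith⟩)

/-- one cannot subtract any positive multiple of a rank-one quadratic form
`ξ ↦ (aᵀ ξ b)²` (with `a, b ≠ 0`) from `Q` while preserving quasiconvexity: the difference
takes a negative value on some rank-one matrix `x ⊗ y`. -/
theorem Q_extremal_def1 (a b : Fin 3 → ℝ) (ha : a ≠ 0) (hb : b ≠ 0) (t : ℝ) (ht : 0 < t) :
    ∃ x y : Fin 3 → ℝ,
      Q (outer x y) - t * ((∑ i : Fin 3, a i * x i) * (∑ i : Fin 3, b i * y i)) ^ 2 < 0 := by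
  by_contra hc
  push_neg at hc
  have key : ∀ x y : Fin 3 → ℝ, Q (outer x y) = 0 →
      (∑ i : Fin 3, a i * x i) * (∑ i : Fin 3, b i * y i) = 0 := by
    intro x y hQ
    have h := hc x y
    rw [hQ] at h
    have hsq : ((∑ i : Fin 3, a i * x i) * (∑ i : Fin 3, b i * y i)) ^ 2 = 0 := by
      nlinarith [sq_nonneg ((∑ i : Fin 3, a i * x i) * (∑ i : Fin 3, b i * y i))]
    exact pow_eq_zero_iff (two_ne_zero) |>.mp hsq
  have e1 := key ![(1:ℝ),0,0] ![(0:ℝ),0,1] (by norm_num [Q, outer, Matrix.cons_val_two, Matrix.tail_cons, Matrix.head_cons])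
  have e2 := key ![(0:ℝ),1,0] ![(1:ℝ),0,0] (by norm_num [Q, outer, Matrix.cons_val_two, Matrix.tail_cons, Matrix.head_cons])
  have e3 := key ![(0:ℝ),0,1] ![(0:ℝ),1,0] (by norm_num [Q, outer, Matrix.cons_val_two, Matrix.tail_cons, Matrix.head_cons])
  have e4 := key ![(1:ℝ),1,1] ![(1:ℝ),1,1] (by norm_num [Q, outer, Matrix.cons_val_two, Matrix.tail_cons, Matrix.head_cons])
  have e5 := key ![(1:ℝ),1,-1] ![(1:ℝ),1,-1] (by norm_num [Q, outer, Matrix.cons_val_two, Matrix.tail_cons, Matrix.head_cons])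
  have e6 := key ![(1:ℝ),-1,1] ![(1:ℝ),-1,1] (by norm_num [Q, outer, Matrix.cons_val_two, Matrix.tail_cons, Matrix.head_cons])
  have e7 := key ![(1:ℝ),-1,-1] ![(1:ℝ),-1,-1] (by norm_num [Q, outer, Matrix.cons_val_two, Matrix.tail_cons, Matrix.head_cons])
  rw [Fin.sum_univ_three, Fin.sum_univ_three] at e1 e2 e3 e4 e5 e6 e7
  norm_num [Matrix.cons_val_two, Matrix.tail_cons, Matrix.head_cons] at e1 e2 e3 e4 e5 e6 e7
  rcases my_aux _ _ _ _ _ _ e1 e2 e3 e4 e5 e6 e7 with ⟨z0, z1, z2⟩ | ⟨z0, z1, z2⟩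
  · exact ha (funext fun i => by fin_cases i <;> assumption)
  · exact hb (funext fun i => by fin_cases i <;> assumption)
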